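/- If W = W0 + W⃗ is a C² solution of the main Vekua equation DW = (Df/f) conj(W) on Ω ⊆ ℝ³ with f a nonvanishing real C² function, then the scalar part satisfies the conductivity equation ∇ · (f² ∇(W0/f)) = 0, and the vector part satisfies the double curl-type equation curl(f^{-2} curl(f W⃗)) = 0. -/

import Mathlib

noncomputable section

/-- ℝ³ as the function space `Fin 3 → ℝ`. -/
abbrev V3 : Type := Fin 3 → ℝ

/-- The quaternion units e₁, e₂, e₃. -/
def qe (i : Fin 3) : Quaternion ℝ :=
  ⟨0, if i = 0 then 1 else 0, if i = 1 then 1 else 0, if i = 2 then 1 else 0⟩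

/-- Embedding of a vector of ℝ³ as a purely vectorial quaternion. -/
def vecQ (v : V3) : Quaternion ℝ := ⟨0, v 0, v 1, v 2⟩

/-- Partial derivative of a quaternion-valued function. -/
def pd (i : Fin 3) (w : V3 → Quaternion ℝ) (x : V3) : Quaternion ℝ :=
  fderiv ℝ w x (Pi.single i 1)

/-- The Moisil–Teodorescu (Dirac) operator D = Σ eᵢ ∂/∂xᵢ. -/
def Dop (w : V3 → Quaternion ℝ) (x : V3) : Quaternion ℝ :=
  ∑ i : Fin 3, qe i * pd i w x

/-- Partial derivative of a real-valued function. -/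
def pdR (i : Fin 3) (u : V3 → ℝ) (x : V3) : ℝ :=
  fderiv ℝ u x (Pi.single i 1)

/-- Gradient of a scalar function. -/
def gradR (u : V3 → ℝ) (x : V3) : V3 := fun i => pdR i u x

/-- Divergence of a vector field. -/
def divg (v : V3 → V3) (x : V3) : ℝ := ∑ i : Fin 3, pdR i (fun y => v y i) x

/-- Curl of a vector field. -/
def curl (v : V3 → V3) (x : V3) : V3 :=
  ![pdR 1 (fun y => v y 2) x - pdR 2 (fun y => v y 1) x,
    pdR 2 (fun y => v y 0) x - pdR 0 (fun y => v y 2) x,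
    pdR 0 (fun y => v y 1) x - pdR 1 (fun y => v y 0) x]

open Filter Topology

def reL : Quaternion ℝ →L[ℝ] ℝ :=
  LinearMap.toContinuousLinearMap (QuaternionAlgebra.reₗ (-1 : ℝ) 0 (-1))
def imIL : Quaternion ℝ →L[ℝ] ℝ :=
  LinearMap.toContinuousLinearMap (QuaternionAlgebra.imIₗ (-1 : ℝ) 0 (-1))
def imJL : Quaternion ℝ →L[ℝ] ℝ :=
  LinearMap.toContinuousLinearMap (QuaternionAlgebra.imJₗ (-1 : ℝ) 0 (-1))
def imKL : Quaternion ℝ →L[ℝ] ℝ :=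
  LinearMap.toContinuousLinearMap (QuaternionAlgebra.imKₗ (-1 : ℝ) 0 (-1))
def qCoeL : ℝ →L[ℝ] Quaternion ℝ :=
  LinearMap.toContinuousLinearMap (Algebra.linearMap ℝ (Quaternion ℝ))
def vecQL : V3 →L[ℝ] Quaternion ℝ :=
  LinearMap.toContinuousLinearMap
    { toFun := vecQ
      map_add' := by intro v w; apply QuaternionAlgebra.ext <;> simp only [Quaternion.re_add, Quaternion.imI_add, Quaternion.imJ_add, Quaternion.imK_add] <;> simp [vecQ]
      map_smul' := by intro r v; apply QuaternionAlgebra.ext <;> simp only [Quaternion.re_smul, Quaternion.imI_smul, Quaternion.imJ_smul, Quaternion.imK_smul] <;> simp [vecQ] }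

lemma clm_comp_fderiv {F G : Type*} [NormedAddCommGroup F] [NormedSpace ℝ F]
    [NormedAddCommGroup G] [NormedSpace ℝ G] (A : F →L[ℝ] G) {w : V3 → F} {x : V3}
    (hw : DifferentiableAt ℝ w x) :
    fderiv ℝ (fun y => A (w y)) x = A.comp (fderiv ℝ w x) :=
  (A.hasFDerivAt.comp x hw.hasFDerivAt).fderiv

lemma pdR_congr {u v : V3 → ℝ} {x : V3} (h : u =ᶠ[𝓝 x] v) (i : Fin 3) :
    pdR i u x = pdR i v x := by unfold pdR; rw [h.fderiv_eq]

lemma pdR_neg {u : V3 → ℝ} (i : Fin 3) (x : V3) :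
    pdR i (fun y => -(u y)) x = -(pdR i u x) := by
  unfold pdR; rw [fderiv_fun_neg]; simp

lemma pdR_mul {u v : V3 → ℝ} {x : V3} (hu : DifferentiableAt ℝ u x)
    (hv : DifferentiableAt ℝ v x) (i : Fin 3) :
    pdR i (fun y => u y * v y) x = pdR i u x * v x + u x * pdR i v x := by
  unfold pdR; rw [fderiv_fun_mul hu hv]
  simp [ContinuousLinearMap.add_apply, ContinuousLinearMap.smul_apply, smul_eq_mul]; ring

lemma pdR_sub {u v : V3 → ℝ} {x : V3} (hu : DifferentiableAt ℝ u x)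
    (hv : DifferentiableAt ℝ v x) (i : Fin 3) :
    pdR i (fun y => u y - v y) x = pdR i u x - pdR i v x := by
  unfold pdR; rw [fderiv_fun_sub hu hv]; simp

lemma diff_pdR {g : V3 → ℝ} {x : V3} (hg : ContDiffAt ℝ 2 g x) (j : Fin 3) :
    DifferentiableAt ℝ (fun y => pdR j g y) x := by
  have hdiff : DifferentiableAt ℝ (fderiv ℝ g) x :=
    (hg.fderiv_right (m := 1) (by norm_num)).differentiableAt one_ne_zero
  exact ((ContinuousLinearMap.apply ℝ ℝ (Pi.single j 1)).differentiableAt).comp x hdiff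

lemma schwarz {g : V3 → ℝ} {x : V3} (hg : ContDiffAt ℝ 2 g x) (i j : Fin 3) :
    pdR i (fun y => pdR j g y) x = pdR j (fun y => pdR i g y) x := by
  have hsym := hg.isSymmSndFDerivAt (by simp [minSmoothness_of_isRCLikeNormedField])
  have hdiff : DifferentiableAt ℝ (fderiv ℝ g) x :=
    (hg.fderiv_right (m := 1) (by norm_num)).differentiableAt one_ne_zero
  have key : ∀ v w : V3, fderiv ℝ (fun y => fderiv ℝ g y v) x w
      = fderiv ℝ (fderiv ℝ g) x w v := by
    intro v w
    have h1 : (fun y => fderiv ℝ g y v)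
        = fun y => (ContinuousLinearMap.apply ℝ ℝ v) (fderiv ℝ g y) := rfl
    rw [h1, clm_comp_fderiv _ hdiff]; rfl
  unfold pdR
  rw [key, key, hsym]

lemma qmk_imI (a : Quaternion ℝ) (p q r s : ℝ) :
    (@HMul.hMul (Quaternion ℝ) (Quaternion ℝ) (Quaternion ℝ) instHMul a ⟨p, q, r, s⟩).imI =
      a.re * q + a.imI * p + a.imJ * s - a.imK * r :=
  Quaternion.imI_mul _ _

lemma qmk_imJ (a : Quaternion ℝ) (p q r s : ℝ) :
    (@HMul.hMul (Quaternion ℝ) (Quaternion ℝ) (Quaternion ℝ) instHMul a ⟨p, q, r, s⟩).imJ =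
      a.re * r - a.imI * s + a.imJ * p + a.imK * q :=
  Quaternion.imJ_mul _ _

lemma qmk_imK (a : Quaternion ℝ) (p q r s : ℝ) :
    (@HMul.hMul (Quaternion ℝ) (Quaternion ℝ) (Quaternion ℝ) instHMul a ⟨p, q, r, s⟩).imK =
      a.re * s + a.imI * r - a.imJ * q + a.imK * p :=
  Quaternion.imK_mul _ _

lemma pd_components {W0 : V3 → ℝ} {Wv : V3 → V3} {x : V3}
    (h0 : DifferentiableAt ℝ W0 x) (hv : DifferentiableAt ℝ Wv x) (i : Fin 3) :
    pd i (fun y => ((W0 y : ℝ) : Quaternion ℝ) + vecQ (Wv y)) x =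
      ⟨pdR i W0 x, pdR i (fun y => Wv y 0) x,
        pdR i (fun y => Wv y 1) x, pdR i (fun y => Wv y 2) x⟩ := by
  set w : V3 → Quaternion ℝ := fun y => ((W0 y : ℝ) : Quaternion ℝ) + vecQ (Wv y) with hwdef
  have hweq : w = fun y => qCoeL (W0 y) + vecQL (Wv y) := by
    funext y
    simp [hwdef, qCoeL, vecQL, QuaternionAlgebra.coe_algebraMap]; rfl
  have hw : DifferentiableAt ℝ w x := by
    rw [hweq]
    exact ((qCoeL.differentiableAt).comp x h0).add ((vecQL.differentiableAt).comp x hv)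
  have comp_eq : ∀ (A : Quaternion ℝ →L[ℝ] ℝ),
      A (pd i w x) = pdR i (fun y => A (w y)) x := by
    intro A
    show A (fderiv ℝ w x (Pi.single i 1)) = _
    rw [pdR, clm_comp_fderiv A hw]
    rfl
  have hre := comp_eq reL
  have hi := comp_eq imIL
  have hj := comp_eq imJL
  have hk := comp_eq imKL
  have e1 : (fun y => reL (w y)) = W0 := by
    funext y; show (w y).re = W0 y; simp only [hwdef, Quaternion.re_add, Quaternion.re_coe]; simp [vecQ]
  have e2 : (fun y => imIL (w y)) = fun y => Wv y 0 := by
    funext y; show (w y).imI = Wv y 0; simp only [hwdef, Quaternion.imI_add, Quaternion.imI_coe]; simp [vecQ]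
  have e3 : (fun y => imJL (w y)) = fun y => Wv y 1 := by
    funext y; show (w y).imJ = Wv y 1; simp only [hwdef, Quaternion.imJ_add, Quaternion.imJ_coe]; simp [vecQ]
  have e4 : (fun y => imKL (w y)) = fun y => Wv y 2 := by
    funext y; show (w y).imK = Wv y 2; simp only [hwdef, Quaternion.imK_add, Quaternion.imK_coe]; simp [vecQ]
  rw [e1] at hre; rw [e2] at hi; rw [e3] at hj; rw [e4] at hk
  exact QuaternionAlgebra.ext hre hi hj hk

theorem stmt9 (Ω : Set V3) (hΩ : IsOpen Ω) (f W0 : V3 → ℝ) (Wv : V3 → V3)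
    (hf : ContDiffOn ℝ 2 f Ω) (hfne : ∀ x ∈ Ω, f x ≠ 0)
    (hW0 : ContDiffOn ℝ 2 W0 Ω) (hWv : ContDiffOn ℝ 2 Wv Ω)
    (hVekua : ∀ x ∈ Ω, Dop (fun y => ((W0 y : ℝ) : Quaternion ℝ) + vecQ (Wv y)) x =
        (f x)⁻¹ • (vecQ (gradR f x) * star (((W0 x : ℝ) : Quaternion ℝ) + vecQ (Wv x)))) :
    ∀ x ∈ Ω,
      divg (fun y => f y ^ 2 • gradR (fun z => W0 z / f z) y) x = 0 ∧
      curl (fun y => (f y ^ 2)⁻¹ • curl (fun z => f z • Wv z) y) x = 0 := by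
  -- basic regularity facts
  have hfA : ∀ y ∈ Ω, ContDiffAt ℝ 2 f y := fun y hy => hf.contDiffAt (hΩ.mem_nhds hy)
  have h0A : ∀ y ∈ Ω, ContDiffAt ℝ 2 W0 y := fun y hy => hW0.contDiffAt (hΩ.mem_nhds hy)
  have hvA : ∀ y ∈ Ω, ContDiffAt ℝ 2 Wv y := fun y hy => hWv.contDiffAt (hΩ.mem_nhds hy)
  have hvAk : ∀ y ∈ Ω, ∀ k : Fin 3, ContDiffAt ℝ 2 (fun z => Wv z k) y := by
    intro y hy k
    exact (contDiffAt_pi.mp (hvA y hy)) k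
  have hfd : ∀ y ∈ Ω, DifferentiableAt ℝ f y :=
    fun y hy => (hfA y hy).differentiableAt two_ne_zero
  have h0d : ∀ y ∈ Ω, DifferentiableAt ℝ W0 y :=
    fun y hy => (h0A y hy).differentiableAt two_ne_zero
  have hvd : ∀ y ∈ Ω, DifferentiableAt ℝ Wv y :=
    fun y hy => (hvA y hy).differentiableAt two_ne_zero
  have hvdk : ∀ y ∈ Ω, ∀ k : Fin 3, DifferentiableAt ℝ (fun z => Wv z k) y :=
    fun y hy k => (hvAk y hy k).differentiableAt two_ne_zero
  -- the quotient W0 / f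
  set u : V3 → ℝ := fun z => W0 z / f z with hu_def
  have huA : ∀ y ∈ Ω, ContDiffAt ℝ 2 u y := by
    intro y hy
    have h1 : u = fun z => W0 z * (f z)⁻¹ := by
      funext z; simp only [hu_def]; rw [div_eq_mul_inv]
    rw [h1]
    exact (h0A y hy).mul ((hfA y hy).inv (hfne y hy))
  have hud : ∀ y ∈ Ω, DifferentiableAt ℝ u y :=
    fun y hy => (huA y hy).differentiableAt two_ne_zero
  -- product rule link between pdR of W0 and pdR of u
  have hu_pdR : ∀ y ∈ Ω, ∀ j : Fin 3,
      pdR j W0 y = pdR j u y * f y + u y * pdR j f y := by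
    intro y hy j
    have hev : W0 =ᶠ[𝓝 y] fun z => u z * f z := by
      filter_upwards [hΩ.mem_nhds hy] with z hz
      show W0 z = u z * f z
      simp only [hu_def]
      rw [div_mul_cancel₀ _ (hfne z hz)]
    rw [pdR_congr hev j, pdR_mul (hud y hy) (hfd y hy) j]
  -- regularity of the components of f • Wv
  have hGA : ∀ y ∈ Ω, ∀ k : Fin 3, ContDiffAt ℝ 2 (fun z => f z * Wv z k) y := by
    intro y hy k; exact (hfA y hy).mul (hvAk y hy k)
  -- the key pointwise identities : f² ∇(W0/f) = - curl (f Wv), componentwise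
  have hE0 : ∀ y ∈ Ω, f y ^ 2 * pdR 0 u y +
      (pdR 1 (fun z => f z * Wv z 2) y - pdR 2 (fun z => f z * Wv z 1) y) = 0 := by
    intro y hy
    have hq := hVekua y hy
    rw [Dop, Fin.sum_univ_three, pd_components (h0d y hy) (hvd y hy) 0,
      pd_components (h0d y hy) (hvd y hy) 1, pd_components (h0d y hy) (hvd y hy) 2] at hq
    rw [Quaternion.ext_iff] at hq
    obtain ⟨hre, hi, hj, hk⟩ := hq
    simp only [Quaternion.re_add, Quaternion.imI_add, Quaternion.imJ_add, Quaternion.imK_add, Quaternion.re_mul, Quaternion.imI_mul, Quaternion.imJ_mul, Quaternion.imK_mul, Quaternion.re_smul, Quaternion.imI_smul, Quaternion.imJ_smul, Quaternion.imK_smul, Quaternion.re_star, Quaternion.imI_star, Quaternion.imJ_star, Quaternion.imK_star, Quaternion.re_coe, Quaternion.imI_coe, Quaternion.imJ_coe, Quaternion.imK_coe, qmk_imI, qmk_imJ, qmk_imK] at hi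
    simp [qe, vecQ, gradR, QuaternionAlgebra.re_mul, QuaternionAlgebra.imI_mul, QuaternionAlgebra.imJ_mul, QuaternionAlgebra.imK_mul] at hi
    have hfy := hfne y hy
    have hu0 := hu_pdR y hy 0
    have hucalc : u y = W0 y / f y := rfl
    rw [hucalc] at hu0
    field_simp at hi hu0
    rw [pdR_mul (hfd y hy) (hvdk y hy 2) 1, pdR_mul (hfd y hy) (hvdk y hy 1) 2]
    linear_combination hi - hu0
  have hE1 : ∀ y ∈ Ω, f y ^ 2 * pdR 1 u y +
      (pdR 2 (fun z => f z * Wv z 0) y - pdR 0 (fun z => f z * Wv z 2) y) = 0 := by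
    intro y hy
    have hq := hVekua y hy
    rw [Dop, Fin.sum_univ_three, pd_components (h0d y hy) (hvd y hy) 0,
      pd_components (h0d y hy) (hvd y hy) 1, pd_components (h0d y hy) (hvd y hy) 2] at hq
    rw [Quaternion.ext_iff] at hq
    obtain ⟨hre, hi, hj, hk⟩ := hq
    simp only [Quaternion.re_add, Quaternion.imI_add, Quaternion.imJ_add, Quaternion.imK_add, Quaternion.re_mul, Quaternion.imI_mul, Quaternion.imJ_mul, Quaternion.imK_mul, Quaternion.re_smul, Quaternion.imI_smul, Quaternion.imJ_smul, Quaternion.imK_smul, Quaternion.re_star, Quaternion.imI_star, Quaternion.imJ_star, Quaternion.imK_star, Quaternion.re_coe, Quaternion.imI_coe, Quaternion.imJ_coe, Quaternion.imK_coe, qmk_imI, qmk_imJ, qmk_imK] at hj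
    simp [qe, vecQ, gradR, QuaternionAlgebra.re_mul, QuaternionAlgebra.imI_mul, QuaternionAlgebra.imJ_mul, QuaternionAlgebra.imK_mul] at hj
    have hfy := hfne y hy
    have hu1 := hu_pdR y hy 1
    have hucalc : u y = W0 y / f y := rfl
    rw [hucalc] at hu1
    field_simp at hj hu1
    rw [pdR_mul (hfd y hy) (hvdk y hy 0) 2, pdR_mul (hfd y hy) (hvdk y hy 2) 0]
    linear_combination hj - hu1
  have hE2 : ∀ y ∈ Ω, f y ^ 2 * pdR 2 u y +
      (pdR 0 (fun z => f z * Wv z 1) y - pdR 1 (fun z => f z * Wv z 0) y) = 0 := by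
    intro y hy
    have hq := hVekua y hy
    rw [Dop, Fin.sum_univ_three, pd_components (h0d y hy) (hvd y hy) 0,
      pd_components (h0d y hy) (hvd y hy) 1, pd_components (h0d y hy) (hvd y hy) 2] at hq
    rw [Quaternion.ext_iff] at hq
    obtain ⟨hre, hi, hj, hk⟩ := hq
    simp only [Quaternion.re_add, Quaternion.imI_add, Quaternion.imJ_add, Quaternion.imK_add, Quaternion.re_mul, Quaternion.imI_mul, Quaternion.imJ_mul, Quaternion.imK_mul, Quaternion.re_smul, Quaternion.imI_smul, Quaternion.imJ_smul, Quaternion.imK_smul, Quaternion.re_star, Quaternion.imI_star, Quaternion.imJ_star, Quaternion.imK_star, Quaternion.re_coe, Quaternion.imI_coe, Quaternion.imJ_coe, Quaternion.imK_coe, qmk_imI, qmk_imJ, qmk_imK] at hk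
    simp [qe, vecQ, gradR, QuaternionAlgebra.re_mul, QuaternionAlgebra.imI_mul, QuaternionAlgebra.imJ_mul, QuaternionAlgebra.imK_mul] at hk
    have hfy := hfne y hy
    have hu2 := hu_pdR y hy 2
    have hucalc : u y = W0 y / f y := rfl
    rw [hucalc] at hu2
    field_simp at hk hu2
    rw [pdR_mul (hfd y hy) (hvdk y hy 1) 0, pdR_mul (hfd y hy) (hvdk y hy 0) 1]
    linear_combination hk - hu2
  intro x hx
  have hux : ContDiffAt ℝ 2 u x := huA x hx
  constructor
  · -- conductivity equation
    rw [divg, Fin.sum_univ_three]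
    have c0 : pdR 0 (fun y => (f y ^ 2 • gradR u y) 0) x
        = pdR 0 (fun y => -(pdR 1 (fun z => f z * Wv z 2) y
            - pdR 2 (fun z => f z * Wv z 1) y)) x := by
      apply pdR_congr
      filter_upwards [hΩ.mem_nhds hx] with y hy
      show f y ^ 2 * pdR 0 u y = _
      have := hE0 y hy; linarith
    have c1 : pdR 1 (fun y => (f y ^ 2 • gradR u y) 1) x
        = pdR 1 (fun y => -(pdR 2 (fun z => f z * Wv z 0) y
            - pdR 0 (fun z => f z * Wv z 2) y)) x := by
      apply pdR_congr
      filter_upwards [hΩ.mem_nhds hx] with y hy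
      show f y ^ 2 * pdR 1 u y = _
      have := hE1 y hy; linarith
    have c2 : pdR 2 (fun y => (f y ^ 2 • gradR u y) 2) x
        = pdR 2 (fun y => -(pdR 0 (fun z => f z * Wv z 1) y
            - pdR 1 (fun z => f z * Wv z 0) y)) x := by
      apply pdR_congr
      filter_upwards [hΩ.mem_nhds hx] with y hy
      show f y ^ 2 * pdR 2 u y = _
      have := hE2 y hy; linarith
    rw [c0, c1, c2, pdR_neg, pdR_neg, pdR_neg,
      pdR_sub (diff_pdR (hGA x hx 2) 1) (diff_pdR (hGA x hx 1) 2) 0,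
      pdR_sub (diff_pdR (hGA x hx 0) 2) (diff_pdR (hGA x hx 2) 0) 1,
      pdR_sub (diff_pdR (hGA x hx 1) 0) (diff_pdR (hGA x hx 0) 1) 2,
      schwarz (hGA x hx 2) 0 1, schwarz (hGA x hx 0) 1 2, schwarz (hGA x hx 1) 2 0]
    ring
  · -- double curl-type equation
    have hcurl0 : ∀ y : V3, curl (fun z => f z • Wv z) y 0
        = pdR 1 (fun z => f z * Wv z 2) y - pdR 2 (fun z => f z * Wv z 1) y := fun y => rfl
    have hcurl1 : ∀ y : V3, curl (fun z => f z • Wv z) y 1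
        = pdR 2 (fun z => f z * Wv z 0) y - pdR 0 (fun z => f z * Wv z 2) y := fun y => rfl
    have hcurl2 : ∀ y : V3, curl (fun z => f z • Wv z) y 2
        = pdR 0 (fun z => f z * Wv z 1) y - pdR 1 (fun z => f z * Wv z 0) y := fun y => rfl
    have hF0 : (fun y => ((f y ^ 2)⁻¹ • curl (fun z => f z • Wv z) y) 0)
        =ᶠ[𝓝 x] fun y => -(pdR 0 u y) := by
      filter_upwards [hΩ.mem_nhds hx] with y hy
      have h := hE0 y hy
      have hfy := hfne y hy
      show (f y ^ 2)⁻¹ * curl (fun z => f z • Wv z) y 0 = -(pdR 0 u y)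
      have h2 : pdR 1 (fun z => f z * Wv z 2) y - pdR 2 (fun z => f z * Wv z 1) y
          = -(f y ^ 2 * pdR 0 u y) := by linarith
      rw [hcurl0 y, h2, mul_neg, inv_mul_cancel_left₀ (pow_ne_zero 2 hfy)]
    have hF1 : (fun y => ((f y ^ 2)⁻¹ • curl (fun z => f z • Wv z) y) 1)
        =ᶠ[𝓝 x] fun y => -(pdR 1 u y) := by
      filter_upwards [hΩ.mem_nhds hx] with y hy
      have h := hE1 y hy
      have hfy := hfne y hy
      show (f y ^ 2)⁻¹ * curl (fun z => f z • Wv z) y 1 = -(pdR 1 u y)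
      have h2 : pdR 2 (fun z => f z * Wv z 0) y - pdR 0 (fun z => f z * Wv z 2) y
          = -(f y ^ 2 * pdR 1 u y) := by linarith
      rw [hcurl1 y, h2, mul_neg, inv_mul_cancel_left₀ (pow_ne_zero 2 hfy)]
    have hF2 : (fun y => ((f y ^ 2)⁻¹ • curl (fun z => f z • Wv z) y) 2)
        =ᶠ[𝓝 x] fun y => -(pdR 2 u y) := by
      filter_upwards [hΩ.mem_nhds hx] with y hy
      have h := hE2 y hy
      have hfy := hfne y hy
      show (f y ^ 2)⁻¹ * curl (fun z => f z • Wv z) y 2 = -(pdR 2 u y)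
      have h2 : pdR 0 (fun z => f z * Wv z 1) y - pdR 1 (fun z => f z * Wv z 0) y
          = -(f y ^ 2 * pdR 2 u y) := by linarith
      rw [hcurl2 y, h2, mul_neg, inv_mul_cancel_left₀ (pow_ne_zero 2 hfy)]
    funext i
    fin_cases i
    · show pdR 1 (fun y => ((f y ^ 2)⁻¹ • curl (fun z => f z • Wv z) y) 2) x
          - pdR 2 (fun y => ((f y ^ 2)⁻¹ • curl (fun z => f z • Wv z) y) 1) x = 0
      rw [pdR_congr hF2 1, pdR_congr hF1 2, pdR_neg, pdR_neg, schwarz hux 1 2]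
      ring
    · show pdR 2 (fun y => ((f y ^ 2)⁻¹ • curl (fun z => f z • Wv z) y) 0) x
          - pdR 0 (fun y => ((f y ^ 2)⁻¹ • curl (fun z => f z • Wv z) y) 2) x = 0
      rw [pdR_congr hF0 2, pdR_congr hF2 0, pdR_neg, pdR_neg, schwarz hux 2 0]
      ring
    · show pdR 0 (fun y => ((f y ^ 2)⁻¹ • curl (fun z => f z • Wv z) y) 1) x
          - pdR 1 (fun y => ((f y ^ 2)⁻¹ • curl (fun z => f z • Wv z) y) 0) x = 0
      rw [pdR_congr hF1 0, pdR_congr hF0 1, pdR_neg, pdR_neg, schwarz hux 0 1]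
      ring
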